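/- Let 1 ≤ p < ∞, let n ≥ 2 be an integer, let f be analytic on the unit disk 𝔻 with primitive F(z) = ∫₀ᶻ f(w) dw, and let F̃_n(z) = Σ_{i=0}^{n} ((−1)^i / i!) (z* − z)^i F^{(i)}(z*) for |z| > 1, where z* = 1/conj(z). Then there exist constants c₁, c₂ > 0 depending only on n and p such that c₁ · ∫_𝔻 (1 − |w|)^{np−2} |f^{(n)}(w)|^p dA(w) ≤ ∫_{|z|>1} |∂̄F̃_n(z)|^p / (|z|^{np/2 − p + 2} − 1)² dA(z) ≤ c₂ · ∫_𝔻 (1 − |w|)^{np−2} |f^{(n)}(w)|^p dA(w). -/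

import Mathlib

open MeasureTheory Metric Complex Set
open scoped ENNReal Real

noncomputable section

/-- The Cauchy–Riemann (Wirtinger) operator `∂̄g = (1/2)(∂g/∂x + i ∂g/∂y)`. -/
def dbar (g : ℂ → ℂ) (z : ℂ) : ℂ :=
  (1 / 2 : ℂ) * (fderiv ℝ g z 1 + Complex.I * fderiv ℝ g z Complex.I)

/-- `z* = 1/conj(z)`. -/
def zstar (z : ℂ) : ℂ := ((starRingEnd ℂ) z)⁻¹

section AuxBesov

lemma zstar_zstar' {z : ℂ} (hz : z ≠ 0) : zstar (zstar z) = z := by simp [zstar]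

lemma norm_zstar' (z : ℂ) : ‖zstar z‖ = ‖z‖⁻¹ := by simp [zstar]

/-- `v ↦ b * conj v` as a continuous ℝ-linear map. -/
def mconj (b : ℂ) : ℂ →L[ℝ] ℂ := b • (Complex.conjCLE.toContinuousLinearMap)

@[simp] lemma mconj_apply (b v : ℂ) : mconj b v = b * (starRingEnd ℂ) v := by
  simp [mconj, Complex.conjCLE_apply]

lemma det_mconj (b : ℂ) : LinearMap.det ((mconj b) : ℂ →ₗ[ℝ] ℂ) = - Complex.normSq b := by
  have h : LinearMap.toMatrix Complex.basisOneI Complex.basisOneI ((mconj b) : ℂ →ₗ[ℝ] ℂ)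
      = !![b.re, b.im; b.im, -b.re] := by
    ext i j
    rw [LinearMap.toMatrix_apply]
    fin_cases i <;> fin_cases j <;>
      simp [Complex.coe_basisOneI_repr, Complex.coe_basisOneI, Complex.conjCLE_apply, mconj,
        Complex.mul_re, Complex.mul_im]
  rw [← LinearMap.det_toMatrix Complex.basisOneI, h, Matrix.det_fin_two_of, Complex.normSq_apply]
  ring

lemma hasFDerivAt_zstar {z : ℂ} (hz : z ≠ 0) :
    HasFDerivAt zstar (mconj (-(zstar z)^2)) z := by
  have hu : (starRingEnd ℂ) z ≠ 0 := by simpa using hz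
  have h1 : HasFDerivAt (fun w : ℂ => (starRingEnd ℂ) w)
      (Complex.conjCLE.toContinuousLinearMap) z := by
    exact Complex.conjCLE.toContinuousLinearMap.hasFDerivAt (x := z)
  have h2 := ((hasDerivAt_inv hu).hasFDerivAt.restrictScalars ℝ).comp z h1
  refine HasFDerivAt.congr_fderiv (f := zstar) h2 ?_
  ext v
  simp [zstar, mconj, Complex.conjCLE_apply, mul_comm, inv_pow]

lemma telescope_besov (q : ℂ) (g : ℕ → ℂ) (n : ℕ) :
    ∑ i ∈ Finset.range (n+1), ((-1:ℂ)^i / (Nat.factorial i : ℂ)) *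
      ((i:ℂ) * q^(i-1) * g i + q^i * g (i+1))
    = ((-1:ℂ)^n / (Nat.factorial n : ℂ)) * q^n * g (n+1) := by
  induction n with
  | zero => simp
  | succ m ih =>
    rw [Finset.sum_range_succ, ih]
    have h0 : ((Nat.factorial m : ℂ)) ≠ 0 := Nat.cast_ne_zero.2 (Nat.factorial_ne_zero m)
    have hfac : ((Nat.factorial (m+1) : ℂ)) = ((m:ℂ)+1) * (Nat.factorial m : ℂ) := by
      push_cast [Nat.factorial_succ]; ring
    have hms : (m + 1) - 1 = m := rfl
    have key : ((-1:ℂ)^(m+1) / ((Nat.factorial (m+1) : ℂ))) * (((m:ℂ)+1) * q^m * g (m+1))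
        = -((((-1:ℂ)^m/(Nat.factorial m : ℂ))) * q^m * g (m+1)) := by
      rw [hfac]
      have hm1 : ((m:ℂ)+1) ≠ 0 := Nat.cast_add_one_ne_zero m
      field_simp
      ring
    rw [hms]
    push_cast
    linear_combination key

lemma dbar_Ftil (n : ℕ) (F Ftil : ℂ → ℂ)
    (hFtil : ∀ z : ℂ, Ftil z =
      ∑ i ∈ Finset.range (n + 1),
        ((-1 : ℂ) ^ i / (Nat.factorial i : ℂ)) * (zstar z - z) ^ i *
          iteratedDeriv i F (zstar z))
    (hA : ∀ i, AnalyticOnNhd ℂ (iteratedDeriv i F) (ball (0:ℂ) 1))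
    {z : ℂ} (hz : 1 < ‖z‖) :
    dbar Ftil z = -(((-1:ℂ)^n / (Nat.factorial n : ℂ)) * (zstar z)^2 * (zstar z - z)^n *
      iteratedDeriv (n+1) F (zstar z)) := by
  have hz0 : z ≠ 0 := by
    intro h; rw [h] at hz; simp at hz; linarith
  set w := zstar z with hw
  have hwball : w ∈ ball (0:ℂ) 1 := by
    simp only [mem_ball, dist_zero_right, hw, zstar]
    rw [norm_inv, RCLike.norm_conj]
    exact inv_lt_one_of_one_lt₀ hz
  set q : ℂ := w - z with hq
  have hzs := hasFDerivAt_zstar hz0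
  have hqder : HasFDerivAt (fun z : ℂ => zstar z - z)
      (mconj (-(w)^2) - ContinuousLinearMap.id ℝ ℂ) z := hzs.sub (hasFDerivAt_id z)
  set g : ℕ → ℂ → ℂ := fun i => iteratedDeriv i F with hg
  have hgd : ∀ i, HasDerivAt (g i) (g (i+1) w) w := by
    intro i
    have h1 : DifferentiableAt ℂ (g i) w := ((hA i) w hwball).differentiableAt
    have h2 : deriv (g i) w = g (i+1) w := by
      rw [hg]; simp [iteratedDeriv_succ]
    rw [← h2]
    exact h1.hasDerivAt
  set P : ℕ → (ℂ →L[ℝ] ℂ) := fun i =>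
    (((-1:ℂ)^i / (Nat.factorial i : ℂ) * q ^ i) • ((g (i+1) w) • mconj (-(w)^2))) +
    ((g i w) • (((-1:ℂ)^i / (Nat.factorial i : ℂ)) •
      (((i:ℂ) * q ^ (i-1)) • (mconj (-(w)^2) - ContinuousLinearMap.id ℝ ℂ)))) with hP
  have hterm : ∀ i, HasFDerivAt
      (fun z : ℂ => ((-1:ℂ)^i / (Nat.factorial i : ℂ)) * (zstar z - z) ^ i *
        iteratedDeriv i F (zstar z)) (P i) z := by
    intro i
    have hpow : HasFDerivAt (fun z : ℂ => (zstar z - z) ^ i)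
        (((i:ℂ) * q ^ (i-1)) • (mconj (-(w)^2) - ContinuousLinearMap.id ℝ ℂ)) z := by
      exact (hasDerivAt_pow i q).comp_hasFDerivAt z hqder
    have hcpow := hpow.const_mul (((-1:ℂ)^i / (Nat.factorial i : ℂ)))
    have hcomp : HasFDerivAt (fun z : ℂ => iteratedDeriv i F (zstar z))
        ((g (i+1) w) • mconj (-(w)^2)) z := by have := (hgd i).comp_hasFDerivAt z hzs; exact this
    exact hcpow.mul hcomp
  have hsum : HasFDerivAt Ftil (∑ i ∈ Finset.range (n+1), P i) z := by
    have : Ftil = fun z => ∑ i ∈ Finset.range (n + 1),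
        ((-1 : ℂ) ^ i / (Nat.factorial i : ℂ)) * (zstar z - z) ^ i *
          iteratedDeriv i F (zstar z) := funext hFtil
    rw [this]
    exact HasFDerivAt.fun_sum (fun i _ => hterm i)
  have hfd : fderiv ℝ Ftil z = ∑ i ∈ Finset.range (n+1), P i := hsum.fderiv
  rw [dbar, hfd]
  rw [ContinuousLinearMap.sum_apply, ContinuousLinearMap.sum_apply, Finset.mul_sum,
    ← Finset.sum_add_distrib, Finset.mul_sum]
  have happ : ∀ i, (1/2:ℂ) * ((P i) 1 + I * (P i) I)
      = (-(w^2)) * (((-1:ℂ)^i / (Nat.factorial i : ℂ)) *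
          ((i:ℂ) * q^(i-1) * g i w + q^i * g (i+1) w)) := by
    intro i
    simp only [hP, ContinuousLinearMap.add_apply, ContinuousLinearMap.smul_apply,
      ContinuousLinearMap.sub_apply, ContinuousLinearMap.id_apply, mconj_apply,
      smul_eq_mul, map_one, Complex.conj_I]
    linear_combination ((1:ℂ)/2 * (((-1:ℂ)^i / (Nat.factorial i : ℂ)) * q^i * g (i+1) w * w^2
      + g i w * ((-1:ℂ)^i / (Nat.factorial i : ℂ)) * (i:ℂ) * q^(i-1) * (w^2 - 1))) * Complex.I_sq
  calc ∑ i ∈ Finset.range (n+1), (1/2:ℂ) * ((P i) 1 + I * (P i) I)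
      = ∑ i ∈ Finset.range (n+1), (-(w^2)) * (((-1:ℂ)^i / (Nat.factorial i : ℂ)) *
          ((i:ℂ) * q^(i-1) * g i w + q^i * g (i+1) w)) := Finset.sum_congr rfl (fun i _ => happ i)
    _ = (-(w^2)) * (((-1:ℂ)^n / (Nat.factorial n : ℂ)) * q^n * g (n+1) w) := by
        rw [← Finset.mul_sum, telescope_besov q (fun i => g i w) n]
    _ = -(((-1:ℂ)^n / (Nat.factorial n : ℂ)) * w^2 * q^n * iteratedDeriv (n+1) F w) := by
        rw [hg]; ring

lemma weight_eq_besov (n : ℕ) (t M p α N : ℝ) (ht0 : 0 < t) (ht1 : t < 1) (hM : 0 ≤ M)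
    (hα : 2*α = N - 2*p + 4) (hα0 : 0 < α) (hN : N = n * p) :
    (t⁻¹)^(4:ℕ) * ((((n.factorial:ℝ))⁻¹ * ((1-t^2)/t)^n * t^2 * M)^p / ((t⁻¹)^α - 1)^2)
      = (((n.factorial:ℝ))⁻¹)^p * ((1-t^2)^N / (1-t^α)^2) * M^p := by
  have h1t2 : (0:ℝ) ≤ 1 - t^2 := by nlinarith
  have hfac : (0:ℝ) < ((n.factorial:ℝ))⁻¹ := by positivity
  have htα : 0 < t^α := Real.rpow_pos_of_pos ht0 α
  have ht1α : t^α < 1 := by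
    calc t^α < 1^α := Real.rpow_lt_rpow ht0.le ht1 hα0
      _ = 1 := Real.one_rpow α
  have hinv : (t⁻¹)^α - 1 = (1 - t^α)/t^α := by
    rw [← Real.rpow_neg_one t, ← Real.rpow_mul ht0.le, neg_one_mul, Real.rpow_neg ht0.le]
    field_simp
  have e0 : ((1-t^2)/t)^n = (1-t^2)^(n:ℕ) / t^(n:ℕ) := div_pow _ _ _
  have hnum : (((n.factorial:ℝ))⁻¹ * ((1-t^2)/t)^n * t^2 * M)^p
      = (((n.factorial:ℝ))⁻¹)^p * ((1-t^2)^N / t^N) * t^(2*p) * M^p := by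
    rw [e0]
    rw [Real.mul_rpow (by positivity) hM, Real.mul_rpow (by positivity) (by positivity),
      Real.mul_rpow hfac.le (by positivity),
      Real.div_rpow (by positivity) (by positivity : (0:ℝ) ≤ t^(n:ℕ))]
    rw [← Real.rpow_natCast (1-t^2) n, ← Real.rpow_mul h1t2, ← Real.rpow_natCast t n,
      ← Real.rpow_mul ht0.le, ← Real.rpow_natCast t 2, ← Real.rpow_mul ht0.le, hN]
    norm_num
  have key : t^α * t^α * t^(2*p) = t^((4:ℝ)) * t^N := by
    rw [← Real.rpow_add ht0, ← Real.rpow_add ht0, ← Real.rpow_add ht0]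
    congr 1
    linarith
  have h4 : (t⁻¹)^(4:ℕ) = (t^((4:ℝ)))⁻¹ := by
    rw [inv_pow, ← Real.rpow_natCast t 4]
    norm_num
  rw [hnum, hinv, div_pow, h4]
  have h4pos : (0:ℝ) < t^((4:ℝ)) := Real.rpow_pos_of_pos ht0 _
  have hNpos : (0:ℝ) < t^N := Real.rpow_pos_of_pos ht0 _
  have h2ppos : (0:ℝ) < t^(2*p) := Real.rpow_pos_of_pos ht0 _
  have h1tαpos : (0:ℝ) < 1 - t^α := by linarith
  field_simp
  linear_combination (1-t^2)^N * M^p * key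

lemma weight_bound_besov (t α N : ℝ) (ht0 : 0 < t) (ht1 : t < 1) (hα1 : 1 ≤ α) (hN2 : 2 ≤ N) :
    α⁻¹^2 * (1-t)^(N-2) ≤ (1-t^2)^N / (1-t^α)^2 ∧
    (1-t^2)^N / (1-t^α)^2 ≤ (2:ℝ)^N * (1-t)^(N-2) := by
  have h1t : (0:ℝ) < 1 - t := by linarith
  have htα_le : t^α ≤ t := by
    calc t^α ≤ t^(1:ℝ) := Real.rpow_le_rpow_of_exponent_ge ht0 ht1.le hα1
      _ = t := Real.rpow_one t
  have hlow : 1 - t ≤ 1 - t^α := by linarith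
  have hbern : 1 - t^α ≤ α * (1-t) := by
    have := one_add_mul_self_le_rpow_one_add (s := t - 1) (by linarith) hα1
    have h2 : (1 + (t-1) : ℝ) = t := by ring
    rw [h2] at this
    linarith
  have hpos : (0:ℝ) < 1 - t^α := lt_of_lt_of_le h1t hlow
  have hsplit : (1-t^2)^N = (1-t)^(N-2) * (1-t)^2 * (1+t)^N := by
    have e1 : (1-t^2 : ℝ) = (1-t)*(1+t) := by ring
    rw [e1, Real.mul_rpow h1t.le (by linarith)]
    congr 1
    rw [← Real.rpow_natCast (1-t) 2, ← Real.rpow_add h1t]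
    norm_num
  have hone : (1:ℝ) ≤ (1+t)^N := by
    calc (1:ℝ) = 1^N := (Real.one_rpow N).symm
      _ ≤ (1+t)^N := Real.rpow_le_rpow (by norm_num) (by linarith) (by linarith)
  have htwo : (1+t)^N ≤ (2:ℝ)^N := Real.rpow_le_rpow (by linarith) (by linarith) (by linarith)
  have hbase : (0:ℝ) ≤ (1-t)^(N-2) := Real.rpow_nonneg h1t.le _
  constructor
  · rw [hsplit, ge_iff_le.symm, div_eq_mul_inv]
    have hsq : (1-t^α)^2 ≤ α^2 * (1-t)^2 := by
      have := mul_self_le_mul_self hpos.le hbern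
      calc (1-t^α)^2 = (1-t^α)*(1-t^α) := sq (1-t^α) ▸ (sq (1-t^α)).symm ▸ (by ring)
        _ ≤ (α*(1-t))*(α*(1-t)) := this
        _ = α^2*(1-t)^2 := by ring
    have hα0 : (0:ℝ) < α := by linarith
    rw [ge_iff_le]
    calc α⁻¹^2 * (1-t)^(N-2)
        = ((1-t)^(N-2) * (1-t)^2 * 1) * (α^2 * (1-t)^2)⁻¹ := by
          field_simp
      _ ≤ ((1-t)^(N-2) * (1-t)^2 * (1+t)^N) * ((1-t^α)^2)⁻¹ := by
          apply mul_le_mul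
          · apply mul_le_mul_of_nonneg_left hone (by positivity)
          · exact inv_anti₀ (by positivity) hsq
          · positivity
          · positivity
  · rw [hsplit, div_eq_mul_inv]
    have hsq2 : (1-t)^2 ≤ (1-t^α)^2 := by nlinarith
    calc (1-t)^(N-2) * (1-t)^2 * (1+t)^N * ((1-t^α)^2)⁻¹
        ≤ (1-t)^(N-2) * (1-t)^2 * (2:ℝ)^N * ((1-t)^2)⁻¹ := by
          apply mul_le_mul
          · exact mul_le_mul_of_nonneg_left htwo (by positivity)
          · exact inv_anti₀ (by positivity) hsq2
          · positivity
          · positivity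
      _ = (2:ℝ)^N * (1-t)^(N-2) := by
          field_simp

end AuxBesov

/-- The change-of-variables identity for the Besov case: the exterior
`∂̄`-integral of the explicit extension `F̃_n` is two-sidedly comparable to the
interior weighted integral of `|f^{(n)}|^p`. -/
theorem exterior_interior_comparison_besov
    (p : ℝ) (hp : 1 ≤ p)
    (n : ℕ) (hn : 2 ≤ n)
    (f F : ℂ → ℂ)
    (hf : DifferentiableOn ℂ f (ball (0 : ℂ) 1))
    (hF0 : F 0 = 0)
    (hFprim : ∀ z ∈ ball (0 : ℂ) 1, HasDerivAt F (f z) z)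
    (Ftil : ℂ → ℂ)
    (hFtil : ∀ z : ℂ, Ftil z =
      ∑ i ∈ Finset.range (n + 1),
        ((-1 : ℂ) ^ i / (Nat.factorial i : ℂ)) * (zstar z - z) ^ i *
          iteratedDeriv i F (zstar z)) :
    ∃ c₁ c₂ : ℝ, 0 < c₁ ∧ 0 < c₂ ∧
      ENNReal.ofReal c₁ *
          (∫⁻ w in ball (0 : ℂ) 1,
            ENNReal.ofReal ((1 - ‖w‖) ^ ((n : ℝ) * p - 2) * ‖iteratedDeriv n f w‖ ^ p)) ≤
        (∫⁻ z in {z : ℂ | 1 < ‖z‖},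
          ENNReal.ofReal (‖dbar Ftil z‖ ^ p /
            (‖z‖ ^ ((n : ℝ) * p / 2 - p + 2) - 1) ^ 2)) ∧
      (∫⁻ z in {z : ℂ | 1 < ‖z‖},
          ENNReal.ofReal (‖dbar Ftil z‖ ^ p /
            (‖z‖ ^ ((n : ℝ) * p / 2 - p + 2) - 1) ^ 2)) ≤
        ENNReal.ofReal c₂ *
          (∫⁻ w in ball (0 : ℂ) 1,
            ENNReal.ofReal ((1 - ‖w‖) ^ ((n : ℝ) * p - 2) * ‖iteratedDeriv n f w‖ ^ p)) := by
  classical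
  have hp0 : (0:ℝ) < p := lt_of_lt_of_le one_pos hp
  have hn2 : (2:ℝ) ≤ (n:ℝ) := by exact_mod_cast hn
  set N : ℝ := (n:ℝ) * p with hNdef
  set α : ℝ := (n:ℝ) * p / 2 - p + 2 with hαdef
  have hN2 : (2:ℝ) ≤ N := by rw [hNdef]; nlinarith
  have hα2 : (2:ℝ) ≤ α := by rw [hαdef]; nlinarith
  have hα1 : (1:ℝ) ≤ α := by linarith
  have hα0 : (0:ℝ) < α := by linarith
  have hαrel : 2*α = N - 2*p + 4 := by rw [hαdef]; ring
  -- analyticity of iterated derivatives of F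
  have hFd : DifferentiableOn ℂ F (ball (0:ℂ) 1) :=
    fun z hz => ((hFprim z hz).differentiableAt).differentiableWithinAt
  have hA : ∀ i, AnalyticOnNhd ℂ (iteratedDeriv i F) (ball (0:ℂ) 1) := by
    intro i
    induction i with
    | zero => simpa [iteratedDeriv_zero] using hFd.analyticOnNhd isOpen_ball
    | succ m ih => simpa [iteratedDeriv_succ] using ih.deriv
  have hiter : ∀ i, ∀ w ∈ ball (0:ℂ) 1, iteratedDeriv i f w = iteratedDeriv (i+1) F w := by
    intro i
    induction i with
    | zero =>
      intro w hw
      simp only [iteratedDeriv_zero, zero_add, iteratedDeriv_one]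
      exact ((hFprim w hw).deriv).symm
    | succ m ih =>
      intro w hw
      rw [iteratedDeriv_succ, iteratedDeriv_succ]
      apply Filter.EventuallyEq.deriv_eq
      exact Filter.eventuallyEq_of_mem (isOpen_ball.mem_nhds hw) ih
  -- the set and change of variables
  set s : Set ℂ := ball (0:ℂ) 1 \ {0} with hsdef
  have hsm : MeasurableSet s := measurableSet_ball.diff (measurableSet_singleton 0)
  have hmem : ∀ w ∈ s, w ≠ 0 ∧ 0 < ‖w‖ ∧ ‖w‖ < 1 := by
    intro w hw
    have hw0 : w ≠ 0 := fun h => hw.2 (by simp [h])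
    exact ⟨hw0, norm_pos_iff.2 hw0, by simpa [dist_zero_right] using hw.1⟩
  have himg : zstar '' s = {z : ℂ | 1 < ‖z‖} := by
    ext z
    constructor
    · rintro ⟨w, hw, rfl⟩
      obtain ⟨hw0, hwpos, hwlt⟩ := hmem w hw
      simp only [Set.mem_setOf_eq, norm_zstar']
      exact (one_lt_inv₀ hwpos).2 hwlt
    · intro hz
      have hz1 : 1 < ‖z‖ := hz
      have hz0 : z ≠ 0 := by rintro rfl; simp at hz1; linarith
      refine ⟨zstar z, ⟨?_, ?_⟩, zstar_zstar' hz0⟩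
      · simp only [mem_ball, dist_zero_right, norm_zstar']
        exact inv_lt_one_of_one_lt₀ hz1
      · simp only [mem_singleton_iff]
        simp [zstar, hz0]
  have hinj : InjOn zstar s := by
    intro a ha b hb h
    have h2 := congrArg zstar h
    rwa [zstar_zstar' (hmem a ha).1, zstar_zstar' (hmem b hb).1] at h2
  have hB : (∫⁻ z in {z : ℂ | 1 < ‖z‖},
        ENNReal.ofReal (‖dbar Ftil z‖ ^ p / (‖z‖ ^ α - 1) ^ 2))
      = ∫⁻ w in s, ENNReal.ofReal |((mconj (-(zstar w)^2)) : ℂ →ₗ[ℝ] ℂ).det| *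
          ENNReal.ofReal (‖dbar Ftil (zstar w)‖ ^ p / (‖zstar w‖ ^ α - 1) ^ 2) := by
    rw [← himg]
    exact lintegral_image_eq_lintegral_abs_det_fderiv_mul volume hsm
      (fun w hw => (hasFDerivAt_zstar (hmem w hw).1).hasFDerivWithinAt) hinj _
  -- pointwise identification of the integrand
  have hpt : ∀ w ∈ s,
      ENNReal.ofReal |((mconj (-(zstar w)^2)) : ℂ →ₗ[ℝ] ℂ).det| *
        ENNReal.ofReal (‖dbar Ftil (zstar w)‖ ^ p / (‖zstar w‖ ^ α - 1) ^ 2)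
      = ENNReal.ofReal ((((n.factorial:ℝ))⁻¹)^p *
          ((1-‖w‖^2)^N / (1-‖w‖^α)^2) * ‖iteratedDeriv (n+1) F w‖^p) := by
    intro w hw
    obtain ⟨hw0, hwpos, hwlt⟩ := hmem w hw
    set t : ℝ := ‖w‖ with htdef
    set M : ℝ := ‖iteratedDeriv (n+1) F w‖ with hMdef
    have hz1 : 1 < ‖zstar w‖ := by rw [norm_zstar']; exact (one_lt_inv₀ hwpos).2 hwlt
    have hzz : zstar (zstar w) = w := zstar_zstar' hw0
    -- determinant
    have hdet : |((mconj (-(zstar w)^2)) : ℂ →ₗ[ℝ] ℂ).det| = (t⁻¹)^(4:ℕ) := by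
      rw [det_mconj, abs_neg, _root_.abs_of_nonneg (Complex.normSq_nonneg _)]
      have : Complex.normSq (-(zstar w)^2) = (Complex.normSq (zstar w))^2 := by
        simp [map_pow]
      rw [this, Complex.normSq_eq_norm_sq, norm_zstar']
      ring
    -- norm of dbar
    have hdbar := dbar_Ftil n F Ftil hFtil hA hz1
    rw [hzz] at hdbar
    have hqnorm : ‖w - zstar w‖ = (1-t^2)/t := by
      have hcw : (starRingEnd ℂ) w ≠ 0 := by simpa using hw0
      have e : w - zstar w = (w * (starRingEnd ℂ) w - 1) / ((starRingEnd ℂ) w) := by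
        rw [zstar]; field_simp
      rw [e, norm_div, RCLike.norm_conj, Complex.mul_conj]
      have e2 : ((Complex.normSq w : ℂ) - 1) = (((Complex.normSq w - 1 : ℝ)) : ℂ) := by
        push_cast; ring
      rw [e2, Complex.norm_real, Real.norm_eq_abs, abs_of_nonpos, Complex.normSq_eq_norm_sq]
      · rw [htdef]; ring
      · rw [Complex.normSq_eq_norm_sq]
        nlinarith
    have hnormdbar : ‖dbar Ftil (zstar w)‖ = ((n.factorial:ℝ))⁻¹ * ((1-t^2)/t)^n * t^2 * M := by
      rw [hdbar, norm_neg, norm_mul, norm_mul, norm_mul, norm_pow, norm_pow, hqnorm]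
      have h1 : ‖((-1:ℂ)^n / (n.factorial:ℂ))‖ = ((n.factorial:ℝ))⁻¹ := by
        rw [norm_div, norm_pow, norm_neg, norm_one, one_pow, Complex.norm_natCast, one_div]
      rw [h1]
      ring
    rw [← ENNReal.ofReal_mul (abs_nonneg _), hdet, hnormdbar, norm_zstar']
    congr 1
    exact weight_eq_besov n t M p α N hwpos hwlt (norm_nonneg _) hαrel hα0 hNdef
  -- measure equivalence of s and ball
  have h_ae : s =ᵐ[volume] ball (0:ℂ) 1 := by
    rw [hsdef]
    apply MeasureTheory.diff_ae_eq_self.2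
    have : volume (ball (0:ℂ) 1 ∩ {0}) ≤ volume ({0} : Set ℂ) :=
      measure_mono inter_subset_right
    simpa using le_antisymm (this.trans (by simp)) (zero_le _)
  have hres : volume.restrict (ball (0:ℂ) 1) = volume.restrict s :=
    (Measure.restrict_congr_set h_ae).symm
  -- constants
  refine ⟨(((n.factorial:ℝ))⁻¹)^p * α⁻¹^2, (((n.factorial:ℝ))⁻¹)^p * (2:ℝ)^N,
    by positivity, by positivity, ?_, ?_⟩
  · -- lower bound
    rw [hB]
    have step1 : ENNReal.ofReal ((((n.factorial:ℝ))⁻¹)^p * α⁻¹^2) *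
        ∫⁻ w in ball (0:ℂ) 1,
          ENNReal.ofReal ((1 - ‖w‖) ^ (N - 2) * ‖iteratedDeriv n f w‖ ^ p)
        = ∫⁻ w in s, ENNReal.ofReal ((((n.factorial:ℝ))⁻¹)^p * α⁻¹^2 *
            ((1 - ‖w‖) ^ (N - 2) * ‖iteratedDeriv n f w‖ ^ p)) := by
      rw [hres, ← lintegral_const_mul' _ _ ENNReal.ofReal_ne_top]
      apply lintegral_congr
      intro w
      rw [← ENNReal.ofReal_mul (by positivity)]
    rw [step1]
    apply lintegral_mono_ae
    rw [ae_restrict_iff' hsm]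
    apply ae_of_all
    intro w hw
    rw [hpt w hw]
    apply ENNReal.ofReal_le_ofReal
    obtain ⟨hw0, hwpos, hwlt⟩ := hmem w hw
    have hMf : ‖iteratedDeriv n f w‖ = ‖iteratedDeriv (n+1) F w‖ := by
      rw [hiter n w hw.1]
    rw [hMf]
    have hwb := (weight_bound_besov ‖w‖ α N hwpos hwlt hα1 hN2).1
    have hMp : (0:ℝ) ≤ ‖iteratedDeriv (n+1) F w‖^p := Real.rpow_nonneg (norm_nonneg _) _
    calc (((n.factorial:ℝ))⁻¹)^p * α⁻¹^2 * ((1 - ‖w‖) ^ (N - 2) * ‖iteratedDeriv (n+1) F w‖ ^ p)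
        = (((n.factorial:ℝ))⁻¹)^p * (α⁻¹^2 * (1 - ‖w‖) ^ (N - 2)) * ‖iteratedDeriv (n+1) F w‖ ^ p := by
          ring
      _ ≤ (((n.factorial:ℝ))⁻¹)^p * ((1-‖w‖^2)^N / (1-‖w‖^α)^2) * ‖iteratedDeriv (n+1) F w‖ ^ p := by
          apply mul_le_mul_of_nonneg_right _ hMp
          apply mul_le_mul_of_nonneg_left hwb (by positivity)
  · -- upper bound
    rw [hB]
    have step1 : ENNReal.ofReal ((((n.factorial:ℝ))⁻¹)^p * (2:ℝ)^N) *
        ∫⁻ w in ball (0:ℂ) 1,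
          ENNReal.ofReal ((1 - ‖w‖) ^ (N - 2) * ‖iteratedDeriv n f w‖ ^ p)
        = ∫⁻ w in s, ENNReal.ofReal ((((n.factorial:ℝ))⁻¹)^p * (2:ℝ)^N *
            ((1 - ‖w‖) ^ (N - 2) * ‖iteratedDeriv n f w‖ ^ p)) := by
      rw [hres, ← lintegral_const_mul' _ _ ENNReal.ofReal_ne_top]
      apply lintegral_congr
      intro w
      rw [← ENNReal.ofReal_mul (by positivity)]
    rw [step1]
    apply lintegral_mono_ae
    rw [ae_restrict_iff' hsm]
    apply ae_of_all
    intro w hw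
    rw [hpt w hw]
    apply ENNReal.ofReal_le_ofReal
    obtain ⟨hw0, hwpos, hwlt⟩ := hmem w hw
    have hMf : ‖iteratedDeriv n f w‖ = ‖iteratedDeriv (n+1) F w‖ := by
      rw [hiter n w hw.1]
    rw [hMf]
    have hwb := (weight_bound_besov ‖w‖ α N hwpos hwlt hα1 hN2).2
    have hMp : (0:ℝ) ≤ ‖iteratedDeriv (n+1) F w‖^p := Real.rpow_nonneg (norm_nonneg _) _
    calc (((n.factorial:ℝ))⁻¹)^p * ((1-‖w‖^2)^N / (1-‖w‖^α)^2) * ‖iteratedDeriv (n+1) F w‖ ^ p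
        ≤ (((n.factorial:ℝ))⁻¹)^p * ((2:ℝ)^N * (1 - ‖w‖) ^ (N - 2)) * ‖iteratedDeriv (n+1) F w‖ ^ p := by
          apply mul_le_mul_of_nonneg_right _ hMp
          apply mul_le_mul_of_nonneg_left hwb (by positivity)
      _ = (((n.factorial:ℝ))⁻¹)^p * (2:ℝ)^N * ((1 - ‖w‖) ^ (N - 2) * ‖iteratedDeriv (n+1) F w‖ ^ p) := by
          ring

end
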